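/- Let A be a left noetherian ring and M a left A-module. If for every collection {I_α}_{α∈J} of injective left A-modules the canonical map ⊕_{α∈J} Hom_A(M, I_α) → Hom_A(M, ⊕_{α∈J} I_α) is an isomorphism, then M is finitely generated. -/

import Mathlib

universe u

open DirectSum

/-- The canonical map `⊕_α Hom_A(M, N_α) → Hom_A(M, ⊕_α N_α)` induced by the inclusions
`N_α ↪ ⊕_α N_α` via the universal property of the direct sum. -/
noncomputable def homDirectSumCanonicalMap (A : Type u) [Ring A] {J : Type u} [DecidableEq J]
    (M : Type u) [AddCommGroup M] [Module A M]
    (N : J → Type u) [∀ α, AddCommGroup (N α)] [∀ α, Module A (N α)] :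
    (⨁ α, (M →ₗ[A] N α)) →+ (M →ₗ[A] ⨁ α, N α) :=
  DirectSum.toAddMonoid fun α =>
    { toFun := fun f => (DirectSum.lof A J N α) ∘ₗ f
      map_zero' := by ext x; simp
      map_add' := by intro f g; ext x; simp }

section Aux

variable {A : Type u} [Ring A]

/-- Component formula for the canonical map. -/
lemma homDirectSumCanonicalMap_component {J : Type u} [DecidableEq J]
    (M : Type u) [AddCommGroup M] [Module A M]
    (I : J → Type u) [∀ α, AddCommGroup (I α)] [∀ α, Module A (I α)]
    (c : ⨁ α, (M →ₗ[A] I α)) (x : M) (n : J) :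
    (homDirectSumCanonicalMap A M I c x) n = c n x := by
  induction c using DirectSum.induction_on with
  | zero => simp
  | of α f =>
    rw [homDirectSumCanonicalMap, DirectSum.toAddMonoid_of]
    by_cases hn : α = n
    · subst hn
      simp [DirectSum.lof_eq_of, DirectSum.of_eq_same]
    · rw [DirectSum.of_eq_of_ne _ _ _ (Ne.symm hn)]
      simp [DirectSum.lof_eq_of, DirectSum.of_eq_of_ne _ _ _ (Ne.symm hn)]
  | add c d hc hd =>
    simp only [map_add, LinearMap.add_apply, DirectSum.add_apply, hc, hd]

/-- Bass–Papp, easy direction: over a left noetherian ring, a direct sum of injective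
modules is injective. -/
lemma Module.Injective.directSum_of_noetherian [IsNoetherianRing A]
    {ι : Type u} [DecidableEq ι]
    (I : ι → Type u) [∀ i, AddCommGroup (I i)] [∀ i, Module A (I i)]
    (hI : ∀ i, Module.Injective A (I i)) : Module.Injective A (⨁ i, I i) := by
  classical
  apply Module.Baer.injective
  intro J g
  -- the range of `g` is finitely generated, hence supported in a finite set `S`
  haveI : Module.Finite A ↥J := Module.Finite.iff_fg.mpr (IsNoetherian.noetherian J)
  have hrange : (LinearMap.range g).FG := Module.Finite.iff_fg.mp (Module.Finite.range g)
  obtain ⟨t, ht⟩ := hrange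
  set S : Finset ι := t.sup (fun y => DFinsupp.support y) with hS
  have hsupp : ∀ y ∈ LinearMap.range g, ∀ n, n ∉ S → y n = 0 := by
    intro y hy
    rw [← ht] at hy
    induction hy using Submodule.span_induction with
    | mem y hy =>
      intro n hn
      rw [← DFinsupp.notMem_support_iff]
      exact fun hmem => hn (Finset.le_sup (f := fun y => DFinsupp.support y) hy hmem)
    | zero => intro n _; simp
    | add y z _ _ hy hz => intro n hn; simp [DirectSum.add_apply, hy n hn, hz n hn]
    | smul a y _ hy => intro n hn; rw [DFinsupp.smul_apply, hy n hn, smul_zero]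
  -- for each `n`, extend the `n`-th component of `g` to all of `A`
  have ext : ∀ n : ι, ∃ hn : A →ₗ[A] I n, ∀ x : ↥J, hn ↑x = (g x) n := by
    intro n
    obtain ⟨hn, hhn⟩ := (hI n).out J.subtype (Submodule.injective_subtype J)
      ((DirectSum.component A ι I n) ∘ₗ g)
    exact ⟨hn, fun x => hhn x⟩
  choose e he using ext
  refine ⟨∑ n ∈ S, (DirectSum.lof A ι I n) ∘ₗ e n, fun x hx => ?_⟩
  have hmem : g ⟨x, hx⟩ ∈ LinearMap.range g := ⟨⟨x, hx⟩, rfl⟩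
  have hsub : DFinsupp.support (g ⟨x, hx⟩) ⊆ S := by
    intro n hn
    by_contra hns
    exact (DFinsupp.mem_support_iff.mp hn) (hsupp _ hmem n hns)
  calc (∑ n ∈ S, (DirectSum.lof A ι I n) ∘ₗ e n) x
      = ∑ n ∈ S, DirectSum.lof A ι I n (e n x) := by
        simp [LinearMap.sum_apply]
    _ = ∑ n ∈ S, DirectSum.lof A ι I n ((g ⟨x, hx⟩) n) := by
        refine Finset.sum_congr rfl fun n _ => ?_
        rw [he n ⟨x, hx⟩]
    _ = ∑ n ∈ DFinsupp.support (g ⟨x, hx⟩), DirectSum.of I n ((g ⟨x, hx⟩) n) := by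
        rw [Finset.sum_subset hsub]
        · exact Finset.sum_congr rfl fun n _ => rfl
        · intro n _ hn
          rw [DFinsupp.notMem_support_iff.mp hn]
          simp
    _ = g ⟨x, hx⟩ := DirectSum.sum_support_of _

end Aux

/-- If `A` is left noetherian and `M` is such that the canonical map
`⊕_α Hom_A(M, I_α) → Hom_A(M, ⊕_α I_α)` is bijective for every family of injective left
`A`-modules `I_α`, then `M` is finitely generated. -/
theorem finite_of_homDirectSum_bijective_on_injectives
    {A : Type u} [Ring A] [IsNoetherianRing A]
    (M : Type u) [AddCommGroup M] [Module A M]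
    (h : ∀ (J : Type u) [DecidableEq J] (I : J → Type u)
      [∀ α, AddCommGroup (I α)] [∀ α, Module A (I α)],
      (∀ α, Module.Injective A (I α)) →
        Function.Bijective (homDirectSumCanonicalMap A M I)) :
    Module.Finite A M := by
  classical
  by_contra hM
  -- build a strictly increasing chain of finitely generated submodules
  have step : ∀ P : Submodule A M, P.FG → ∃ P' : Submodule A M, P'.FG ∧ P < P' := by
    intro P hP
    have hPne : P ≠ ⊤ := by
      rintro rfl
      exact hM (Module.finite_def.mpr hP)
    obtain ⟨x, hx⟩ : ∃ x : M, x ∉ P := by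
      by_contra hc
      push_neg at hc
      exact hPne (Submodule.eq_top_iff'.mpr hc)
    refine ⟨P ⊔ Submodule.span A {x}, hP.sup (Submodule.fg_span_singleton x), ?_⟩
    refine lt_of_le_of_ne le_sup_left fun hEq => hx ?_
    rw [hEq]
    exact Submodule.mem_sup_right (Submodule.mem_span_singleton_self x)
  choose f hfg hlt using step
  let seq : ℕ → {P : Submodule A M // P.FG} := fun n =>
    Nat.rec ⟨⊥, Submodule.fg_bot⟩ (fun _ p => ⟨f p.1 p.2, hfg p.1 p.2⟩) n
  have seq_lt : ∀ n, (seq n).1 < (seq (n + 1)).1 := fun n => hlt _ _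
  have seq_mono : Monotone fun n => (seq n).1 :=
    monotone_nat_of_le_succ fun n => (seq_lt n).le
  set N : Submodule A M := ⨆ n, (seq n).1 with hN
  have seq_le : ∀ n, (seq n).1 ≤ N := fun n => le_iSup (fun n => (seq n).1) n
  have mem_N : ∀ x : M, x ∈ N → ∃ m, x ∈ (seq m).1 := fun x hx =>
    (Submodule.mem_iSup_of_chain ⟨fun n => (seq n).1, seq_mono⟩ x).mp hx
  -- injective modules containing the quotients N / (seq n)
  let Qn : ℕ → Type u := fun n => ↥N ⧸ ((seq n).1.comap N.subtype)
  have emb : ∀ n : ℕ, ∃ (In : Type u) (_ : AddCommGroup In) (_ : Module A In),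
      Module.Injective A In ∧ ∃ e : Qn n →ₗ[A] In, Function.Injective e := by
    intro n
    refine ⟨↥(CategoryTheory.Injective.under (ModuleCat.of A (Qn n))), inferInstance,
      inferInstance, ?_, ?_⟩
    · exact Module.injective_module_of_injective_object A _
        (inj := CategoryTheory.Injective.injective_under (ModuleCat.of A (Qn n)))
    · exact ⟨(CategoryTheory.Injective.ι (ModuleCat.of A (Qn n))).hom,
        (ModuleCat.mono_iff_injective _).mp
          (CategoryTheory.Injective.ι_mono (ModuleCat.of A (Qn n)))⟩
  choose I0 iAcg iMod hInj0 e he using emb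
  letI : ∀ n, AddCommGroup (I0 n) := iAcg
  letI : ∀ n, Module A (I0 n) := iMod
  let I : ULift.{u} ℕ → Type u := fun k => I0 k.down
  letI instAcg : ∀ k, AddCommGroup (I k) := fun k => iAcg k.down
  letI instMod : ∀ k, Module A (I k) := fun k => iMod k.down
  have hInj : ∀ k, Module.Injective A (I k) := fun k => hInj0 k.down
  let φ : ∀ n : ℕ, ↥N →ₗ[A] I0 n := fun n =>
    (e n) ∘ₗ (Submodule.mkQ ((seq n).1.comap N.subtype))
  have φ_zero : ∀ (x : ↥N) (n : ℕ), (x : M) ∈ (seq n).1 → φ n x = 0 := by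
    intro x n hx
    show (e n) (Submodule.mkQ ((seq n).1.comap N.subtype) x) = 0
    have h0 : Submodule.mkQ ((seq n).1.comap N.subtype) x = 0 := by
      rw [Submodule.mkQ_apply, Submodule.Quotient.mk_eq_zero]
      exact hx
    rw [h0, map_zero]
  have φ_ne : ∀ n : ℕ, ∃ x : ↥N, φ n x ≠ 0 := by
    intro n
    obtain ⟨x, hx1, hx0⟩ := SetLike.exists_of_lt (seq_lt n)
    refine ⟨⟨x, seq_le (n + 1) hx1⟩, fun hc => hx0 ?_⟩
    have h0 : (e n) (Submodule.mkQ ((seq n).1.comap N.subtype) ⟨x, seq_le (n + 1) hx1⟩) = 0 := hc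
    have h1 : Submodule.mkQ ((seq n).1.comap N.subtype) ⟨x, seq_le (n + 1) hx1⟩ = 0 := by
      apply he n
      rw [map_zero]
      exact h0
    rw [Submodule.mkQ_apply, Submodule.Quotient.mk_eq_zero] at h1
    exact h1
  -- the map `N → ⊕ I k`
  have φ_bound : ∀ x : ↥N, ∃ m, ∀ n, m ≤ n → φ n x = 0 := by
    intro x
    obtain ⟨m, hm⟩ := mem_N x x.2
    exact ⟨m, fun n hn => φ_zero x n (seq_mono hn hm)⟩
  choose b hb using φ_bound
  let F : ↥N → ⨁ k, I k := fun x =>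
    ∑ n ∈ Finset.range (b x), DirectSum.lof A (ULift.{u} ℕ) I (ULift.up n) (φ n x)
  have hF : ∀ (x : ↥N) (k : ULift.{u} ℕ), (F x) k = φ k.down x := by
    intro x k
    rcases lt_or_ge k.down (b x) with hk | hk
    · show (∑ n ∈ Finset.range (b x),
        DirectSum.lof A (ULift.{u} ℕ) I (ULift.up n) (φ n x)) k = φ k.down x
      rw [DFinsupp.finset_sum_apply]
      rw [Finset.sum_eq_single_of_mem k.down (Finset.mem_range.mpr hk)]
      · exact DirectSum.lof_apply (M := I) A (ULift.up k.down) (φ k.down x)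
      · intro m _ hmn
        rw [DirectSum.lof_eq_of, DirectSum.of_eq_of_ne]
        intro hq
        exact hmn (congrArg ULift.down hq.symm)
    · show (∑ n ∈ Finset.range (b x),
        DirectSum.lof A (ULift.{u} ℕ) I (ULift.up n) (φ n x)) k = φ k.down x
      rw [DFinsupp.finset_sum_apply, hb x k.down hk, Finset.sum_eq_zero]
      intro m hm
      rw [DirectSum.lof_eq_of, DirectSum.of_eq_of_ne]
      intro hq
      have h2 : m = k.down := congrArg ULift.down hq.symm
      have h3 : m < b x := Finset.mem_range.mp hm
      omega
  let fN : ↥N →ₗ[A] ⨁ k, I k :=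
    { toFun := F
      map_add' := by
        intro x y
        refine DFinsupp.ext fun k => ?_
        rw [DirectSum.add_apply, hF, hF, hF, map_add]
      map_smul' := by
        intro a x
        refine DFinsupp.ext fun k => ?_
        rw [RingHom.id_apply, DFinsupp.smul_apply, hF, hF, map_smul] }
  -- extend to M using injectivity of the direct sum (Bass–Papp)
  have hDS : Module.Injective A (⨁ k, I k) :=
    @Module.Injective.directSum_of_noetherian A _ _ (ULift.{u} ℕ) _ I instAcg instMod hInj
  obtain ⟨g, hg⟩ := hDS.out N.subtype (Submodule.injective_subtype N) fN
  -- use the hypothesis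
  obtain ⟨c, hc⟩ := (h (ULift.{u} ℕ) I hInj).2 g
  obtain ⟨k, hk⟩ := Infinite.exists_notMem_finset (DFinsupp.support c)
  have hck : c k = 0 := DFinsupp.notMem_support_iff.mp hk
  obtain ⟨x, hx⟩ := φ_ne k.down
  apply hx
  have h1 : φ k.down x = (g ↑x) k := by
    rw [show g ↑x = fN x from hg x]
    exact (hF x k).symm
  rw [h1, ← hc, homDirectSumCanonicalMap_component, hck]
  rfl
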